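/- For n ≥ 1 and 0 ≤ l ≤ ⌊n/2⌋, L_{h,n}^{l}(x) = F_{h,n-1}^{l-1}(x) + F_{h,n+1}^{l}(x), where F_{h,n-1}^{-1} is interpreted as the empty sum 0 when l = 0. -/

import Mathlib

open Finset

/-- Incomplete h-Fibonacci polynomials: F_{h,n}^l = ∑_{i=0}^l C(n-1-i,i) h^(n-1-2i). -/
noncomputable def incF (h : ℝ) (n l : ℕ) : ℝ :=
  ∑ i ∈ Finset.range (l + 1), (Nat.choose (n - 1 - i) i : ℝ) * h ^ (n - 1 - 2 * i)

/-- Incomplete h-Lucas polynomials: L_{h,n}^l = ∑_{i=0}^l (n/(n-i)) C(n-i,i) h^(n-2i). -/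
noncomputable def incL (h : ℝ) (n l : ℕ) : ℝ :=
  ∑ i ∈ Finset.range (l + 1), ((n : ℝ) / ((n - i : ℕ) : ℝ)) * (Nat.choose (n - i) i : ℝ) * h ^ (n - 2 * i)

/-- h-Fibonacci sequence. -/
noncomputable def Fh (h : ℝ) : ℕ → ℝ
  | 0 => 0
  | 1 => 1
  | n + 2 => h * Fh h (n + 1) + Fh h n

/-- h-Lucas sequence. -/
noncomputable def Lh (h : ℝ) : ℕ → ℝ
  | 0 => 2
  | 1 => h
  | n + 2 => h * Lh h (n + 1) + Lh h n


lemma key_aux (n i : ℕ) (h2 : 2*(i+1) ≤ n) :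
    ((n:ℝ)/((n-(i+1):ℕ):ℝ)) * (Nat.choose (n-(i+1)) (i+1) : ℝ)
    = (Nat.choose (n-2-i) i : ℝ) + (Nat.choose (n-(i+1)) (i+1) : ℝ) := by
  set m := n - (i+1) with hm
  have hmi : i + 1 ≤ m := by omega
  have hm1 : m - 1 + 1 = m := by omega
  have hc : (m : ℝ) * (Nat.choose (m-1) i : ℝ) = (Nat.choose m (i+1) : ℝ) * (i+1) := by
    have := Nat.add_one_mul_choose_eq (m-1) i
    rw [hm1] at this
    exact_mod_cast this
  have hmne : (m:ℝ) ≠ 0 := by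
    exact Nat.cast_ne_zero.mpr (by omega)
  have he : n - 2 - i = m - 1 := by omega
  have hn : (n:ℝ) = (m:ℝ) + (i+1:ℕ) := by
    have : n = m + (i+1) := by omega
    exact_mod_cast this
  rw [he, hn]
  field_simp
  push_cast at hc ⊢
  linear_combination -hc

theorem incL_eq_incF_add (h : ℝ) (n l : ℕ) (hn : 1 ≤ n) (hl : l ≤ n / 2) :
    incL h n l = (if l = 0 then 0 else incF h (n - 1) (l - 1)) + incF h (n + 1) l := by
  induction l with
  | zero =>
    have hne : (n:ℝ) ≠ 0 := Nat.cast_ne_zero.mpr (by omega)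
    simp [incL, incF, Finset.sum_range_one, div_self hne]
  | succ l ih =>
    have hl' : l ≤ n / 2 := by omega
    have h2 : 2 * (l + 1) ≤ n := by omega
    have hLs : incL h n (l+1) = incL h n l +
        ((n : ℝ) / ((n - (l+1) : ℕ) : ℝ)) * (Nat.choose (n - (l+1)) (l+1) : ℝ) * h ^ (n - 2 * (l+1)) := by
      simp [incL, Finset.sum_range_succ]
    have hF1 : incF h (n+1) (l+1) = incF h (n+1) l +
        (Nat.choose (n - (l+1)) (l+1) : ℝ) * h ^ (n - 2 * (l+1)) := by
      have e1 : n + 1 - 1 - (l+1) = n - (l+1) := by omega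
      have e2 : n + 1 - 1 - 2 * (l+1) = n - 2 * (l+1) := by omega
      simp [incF, Finset.sum_range_succ, e1, e2]
    have hF2 : incF h (n-1) l = (if l = 0 then 0 else incF h (n-1) (l-1)) +
        (Nat.choose (n - 2 - l) l : ℝ) * h ^ (n - 2 * (l+1)) := by
      rcases Nat.eq_zero_or_pos l with rfl | hlpos
      · have e1 : n - 1 - 1 = n - 2 := by omega
        have e2 : n - 1 - 1 - 2 * 0 = n - 2 * (0+1) := by omega
        simp [incF, Finset.sum_range_one, e1, e2]
      · have hl1 : l - 1 + 1 = l := by omega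
        have e1 : n - 1 - 1 - (l - 1 + 1) = n - 2 - l := by omega
        have e2 : n - 1 - 1 - 2 * (l - 1 + 1) = n - 2 * (l+1) := by omega
        rw [if_neg (by omega)]
        conv_lhs => rw [incF, show l + 1 = (l - 1 + 1) + 1 from by omega, Finset.sum_range_succ]
        rw [e1, e2, hl1, incF, hl1]
    rw [hLs, ih hl', if_neg (Nat.succ_ne_zero l), Nat.succ_sub_one, hF1, hF2,
      key_aux n l h2]
    ring
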